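/- Let d ≥ 2 be an integer and let η be the Minkowski bilinear form on ℝ^{d+1}, η(x, y) = −x₀y₀ + Σ_{i=1}^{d} x_i y_i, with standard basis e₀, e₁, …, e_d. Let T be a symmetric bilinear form on ℝ^{d+1} such that T(l, l) ≥ 0 for every l ∈ ℝ^{d+1} with η(l, l) = 0, and such that T(e₀, e_A) = 0 for all A = 2, …, d. Define ρ = T(e₀, e₀), p_z = T(e₁, e₁), and the η-trace T̂ = −T(e₀, e₀) + Σ_{i=1}^{d} T(e_i, e_i). Then ϖ := d·ρ + T̂ − p_z ≥ 0. -/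

import Mathlib

/-- Let `η` be the Minkowski bilinear form on `ℝ^(d+1)` (signature
`(−,+,…,+)`) and `T` a symmetric bilinear form satisfying the null energy
condition `T(l,l) ≥ 0` for all `η`-null `l`, with no mixed components
`T(e₀, e_A) = 0` for `A = 2, …, d`. With `ρ = T(e₀,e₀)`, `p_z = T(e₁,e₁)` and
the `η`-trace `T̂ = −T(e₀,e₀) + Σᵢ T(eᵢ,eᵢ)`, one has `ϖ = d·ρ + T̂ − p_z ≥ 0`. -/
theorem nec_implies_varpi_nonneg
    (d : ℕ) (hd : 2 ≤ d)
    (η : (Fin (d + 1) → ℝ) → (Fin (d + 1) → ℝ) → ℝ)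
    (hη : ∀ x y, η x y = (∑ i, x i * y i) - 2 * x 0 * y 0)
    (T : (Fin (d + 1) → ℝ) →ₗ[ℝ] (Fin (d + 1) → ℝ) →ₗ[ℝ] ℝ)
    (hsymm : ∀ x y, T x y = T y x)
    (e : Fin (d + 1) → (Fin (d + 1) → ℝ))
    (he : ∀ i, e i = Pi.single i (1 : ℝ))
    (hNEC : ∀ l : Fin (d + 1) → ℝ, η l l = 0 → 0 ≤ T l l)
    (hmix : ∀ A : Fin (d + 1), 2 ≤ (A : ℕ) → T (e 0) (e A) = 0)
    (ρ pz Ttr : ℝ)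
    (hρ : ρ = T (e 0) (e 0))
    (hpz : pz = T (e 1) (e 1))
    (hTtr : Ttr = (∑ i, T (e i) (e i)) - 2 * T (e 0) (e 0)) :
    0 ≤ (d : ℝ) * ρ + Ttr - pz := by
  have h01 : ((1 : Fin (d+1)) : ℕ) = 1 := by
    have : 1 < d + 1 := by omega
    simp [Fin.val_one', Nat.mod_eq_of_lt this]
  have key : ∀ A : Fin (d+1), 2 ≤ (A : ℕ) → 0 ≤ ρ + T (e A) (e A) := by
    intro A hA
    have hA0 : (0 : Fin (d+1)) ≠ A := by
      intro h; rw [← h] at hA; simp at hA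
    have hnull : η (e 0 + e A) (e 0 + e A) = 0 := by
      rw [hη]
      have hx : ∀ i, (e 0 + e A) i = (if i = 0 then (1:ℝ) else 0) + (if i = A then 1 else 0) := by
        intro i; simp [he, Pi.single_apply]
      have hx2 : ∀ i, (e 0 + e A) i * (e 0 + e A) i
          = (if i = 0 then (1:ℝ) else 0) + (if i = A then 1 else 0) := by
        intro i
        rw [hx]
        by_cases h0 : i = 0 <;> by_cases ha : i = A
        · exact absurd (h0 ▸ ha) hA0
        all_goals simp [h0, ha, hA0, Ne.symm hA0]
      have h0v : (e 0 + e A) 0 = 1 := by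
        rw [hx 0, if_pos rfl, if_neg hA0]; norm_num
      rw [h0v]
      simp only [hx2]
      rw [Finset.sum_add_distrib]
      simp [hA0]
      norm_num
    have hTll := hNEC _ hnull
    have hexp : T (e 0 + e A) (e 0 + e A)
        = T (e 0) (e 0) + T (e 0) (e A) + T (e A) (e 0) + T (e A) (e A) := by
      simp [map_add]; ring
    rw [hexp, hmix A hA, hsymm (e A) (e 0), hmix A hA] at hTll
    rw [hρ]; linarith
  -- split the sum
  set f : Fin (d+1) → ℝ := fun i => T (e i) (e i) with hf
  have hsplit : Finset.univ.filter (fun A : Fin (d+1) => ¬ 2 ≤ (A : ℕ)) = {0, 1} := by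
    ext A
    simp only [Finset.mem_filter, Finset.mem_univ, true_and, Finset.mem_insert,
      Finset.mem_singleton]
    constructor
    · intro h
      interval_cases h' : (A : ℕ)
      · left; exact Fin.ext (by rw [h', Fin.val_zero])
      · right; exact Fin.ext (by rw [h', h01])
    · rintro (rfl | rfl)
      · rw [Fin.val_zero]; omega
      · rw [h01]; omega
  have hcard : (Finset.univ.filter (fun A : Fin (d+1) => 2 ≤ (A : ℕ))).card = d - 1 := by
    have h1 := Finset.card_filter_add_card_filter_not
      (s := (Finset.univ : Finset (Fin (d+1)))) (p := fun A : Fin (d+1) => 2 ≤ (A : ℕ))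
    rw [hsplit] at h1
    have : ({0, 1} : Finset (Fin (d+1))).card = 2 := by
      rw [Finset.card_insert_of_notMem, Finset.card_singleton]
      simp only [Finset.mem_singleton]
      intro h
      have h2 := congrArg Fin.val h
      rw [Fin.val_zero, h01] at h2
      omega
    simp [this, Fintype.card_fin] at h1
    omega
  have hsum : ∑ i, f i = f 0 + f 1 + ∑ A ∈ Finset.univ.filter (fun A : Fin (d+1) => 2 ≤ (A : ℕ)), f A := by
    rw [← Finset.sum_filter_add_sum_filter_not Finset.univ (fun A : Fin (d+1) => 2 ≤ (A : ℕ)) f,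
      hsplit]
    have : (0 : Fin (d+1)) ∉ ({1} : Finset (Fin (d+1))) := by
      simp only [Finset.mem_singleton]
      intro h; have h2 := congrArg Fin.val h; rw [Fin.val_zero, h01] at h2; omega
    rw [Finset.sum_insert this, Finset.sum_singleton]
    ring
  have hpos : 0 ≤ ∑ A ∈ Finset.univ.filter (fun A : Fin (d+1) => 2 ≤ (A : ℕ)), (ρ + f A) :=
    Finset.sum_nonneg fun A hA => key A (Finset.mem_filter.mp hA).2
  rw [Finset.sum_add_distrib, Finset.sum_const, hcard, nsmul_eq_mul] at hpos
  have hdc : ((d - 1 : ℕ) : ℝ) = (d : ℝ) - 1 := by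
    have : (1:ℕ) ≤ d := by omega
    push_cast [this]; ring
  rw [hdc] at hpos
  have hf0 : f 0 = ρ := hρ.symm
  have hf1 : f 1 = pz := hpz.symm
  rw [hTtr, hsum, hf0, hf1]
  nlinarith [hpos]
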